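/- For 1≤i≤r let A_i=⋂_{g∈G}⋃_{k≥0}⋂_{l≥k}σ^g(Z_{i,l}), where Z_{i,k}=⋃_{v∈D_{i+kr}}σ^{v⁻¹}C_{i+kr,i}. Then the factor map π:X→←G from X onto its associated G-odometer is injective when restricted to A_i. -/

import Mathlib

open Pointwise MeasureTheory Filter Topology

/-- The (left) shift action of `G` on `G → A`: `(σ^g x)(h) = x(g⁻¹ h)`. -/
def shift {G A : Type*} [Group G] (g : G) (x : G → A) : G → A := fun h => x (g⁻¹ * h)

/-- `Per(x, Γ, α) = {g ∈ G : x(γ g) = α for all γ ∈ Γ}`. -/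
def Per {G A : Type*} [Group G] (x : G → A) (Γ : Subgroup G) (α : A) : Set G :=
  {g : G | ∀ γ ∈ Γ, x (γ * g) = α}

/-- `Per(x, Γ) = ⋃_α Per(x, Γ, α)`. -/
def PerAll {G A : Type*} [Group G] (x : G → A) (Γ : Subgroup G) : Set G :=
  ⋃ α : A, Per x Γ α

/-- `x` is a Toeplitz array if every `g ∈ G` is periodic for some finite index subgroup. -/
def IsToeplitz {G A : Type*} [Group G] (x : G → A) : Prop :=
  ∀ g : G, ∃ Γ : Subgroup G, Γ.FiniteIndex ∧ g ∈ PerAll x Γ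

/-- `D` is a fundamental domain of `G / Γ`: every `g ∈ G` can be written uniquely as
`g = γ u` with `γ ∈ Γ` and `u ∈ D`. -/
def IsFundDomain {G : Type*} [Group G] (Γ : Subgroup G) (D : Finset G) : Prop :=
  ∀ g : G, ∃! p : G × G, p.1 ∈ Γ ∧ p.2 ∈ D ∧ g = p.1 * p.2

/-- The symbol `α_{m+1} ∈ Σ = {1, …, r}` of the construction: the symbol `j ∈ {1, …, r}` with
`j ≡ m+1 (mod r)`, rendered in `Fin r` (the symbol `i ∈ {1, …, r}` corresponds to `i-1`). -/
def sym {r : ℕ} (hr : 1 < r) (m : ℕ) : Fin r := ⟨m % r, Nat.mod_lt m (by omega)⟩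

/-- The `G`-odometer associated to a nested decreasing sequence `(Γ n)` of subgroups of `G`:
the inverse limit of the canonical projections `G ⧸ Γ (n+1) → G ⧸ Γ n`, realized as the set of
compatible sequences in `Π n, G ⧸ Γ n`. -/
def GOdometer {G : Type*} [Group G] (Γ : ℕ → Subgroup G) : Set (Π n, G ⧸ Γ n) :=
  {y | ∀ (n : ℕ) (g : G), y (n + 1) = (g : G ⧸ Γ (n + 1)) → y n = (g : G ⧸ Γ n)}

lemma shift_shift {G A : Type*} [Group G] (a b : G) (x : G → A) :
    shift a (shift b x) = shift (a * b) x := by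
  funext h
  simp [shift, mul_inv_rev, mul_assoc]

theorem statement18 {G : Type*} [Group G] [Countable G]
    {r : ℕ} (hr : 1 < r)
    -- the sequence of subgroups (with the convention `Γ 0 = G`, the data of the paper being
    -- `Γ 1 > Γ 2 > ⋯`)
    (Γ : ℕ → Subgroup G) (hΓ0 : Γ 0 = ⊤) (hanti : StrictAnti Γ)
    (hnormal : ∀ n, (Γ n).Normal) (hfi : ∀ n, (Γ n).FiniteIndex)
    (hint : (⨅ n, Γ n) = ⊥) (hidx : ∀ n, 3 ≤ (Γ (n + 1)).relIndex (Γ n))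
    -- the fundamental domains
    (D : ℕ → Finset G) (hD0 : D 0 = {1}) (hfund : ∀ n, IsFundDomain (Γ n) (D n))
    (hone : ∀ n, (1 : G) ∈ D n) (hDmono : ∀ n, D n ⊆ D (n + 1))
    (hcoverD : ∀ g : G, ∃ n, g ∈ D n)
    (hdecomp : ∀ i j, i < j →
      (D j : Set G) = ⋃ v ∈ (D j : Set G) ∩ (Γ i : Set G), v • (D i : Set G))
    -- the sets `J m`
    (J : ℕ → Set G) (hJ0 : J 0 = {1})
    (hJ : ∀ m, 1 ≤ m → J m = (D m : Set G) \ ⋃ i < m, J i * ((Γ (i + 1) : Subgroup G) : Set G))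
    -- the Toeplitz array `η`
    (η : G → Fin r)
    (hηdef : ∀ (m : ℕ), ∀ h ∈ J m, ∀ g ∈ Γ (m + 1), η (h * g) = sym hr m)
    -- `X` is the orbit closure of `η`
    (X : Set (G → Fin r)) (hX : X = closure {y | ∃ g : G, y = shift g η})
    -- the sets `C n` and `C_{n,i}`
    (C : ℕ → Set (G → Fin r))
    (hC : ∀ n, C n = {x | x ∈ X ∧ ∀ a : Fin r, Per x (Γ n) a = Per η (Γ n) a})
    (Ci : ℕ → Fin r → Set (G → Fin r))
    (hCi : ∀ n (i : Fin r), Ci n i = {x | x ∈ C n ∧ ∀ g ∈ J n, x g = i})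
    -- `π` is the almost 1-1 factor map from `X` onto the odometer:
    -- `π(x) = (g_n Γ_n)_n` where `x ∈ σ^{g_n} C_n`
    (π : (G → Fin r) → Π n, G ⧸ Γ n)
    (hπ : ∀ x ∈ X, ∀ (n : ℕ) (g : G), x ∈ shift g '' C n → π x n = (g : G ⧸ Γ n))
    (hπonto : π '' X = GOdometer Γ)
    -- the sets `Z_{i,k} = ⋃_{v ∈ D_{i+kr}} σ^{v⁻¹} C_{i+kr, i}` (the symbol `i ∈ {1,…,r}`
    -- corresponding to `i : Fin r` is `(i : ℕ) + 1`)
    (Z : Fin r → ℕ → Set (G → Fin r))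
    (hZ : ∀ (i : Fin r) (k : ℕ),
      Z i k = ⋃ v ∈ D ((i : ℕ) + 1 + k * r), shift v⁻¹ '' Ci ((i : ℕ) + 1 + k * r) i)
    -- the sets `A_i = ⋂_{g ∈ G} ⋃_{k ≥ 0} ⋂_{l ≥ k} σ^g (Z_{i,l})`
    (A : Fin r → Set (G → Fin r))
    (hA : ∀ i : Fin r, A i = ⋂ g : G, ⋃ k : ℕ, ⋂ l, ⋂ (_ : k ≤ l), shift g '' Z i l) :
    -- `π` is injective on `A i`
    ∀ i : Fin r, Set.InjOn π (A i) := by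
  -- X is shift-invariant
  have hXinv : ∀ (u : G) (c : G → Fin r), c ∈ X → shift u c ∈ X := by
    intro u c hc
    rw [hX] at hc ⊢
    have hcont : Continuous (shift u : (G → Fin r) → (G → Fin r)) :=
      continuous_pi fun h => continuous_apply _
    have h1 : shift u c ∈ shift u '' closure {y | ∃ g : G, y = shift g η} := ⟨c, hc, rfl⟩
    have h2 := image_closure_subset_closure_image (s := {y | ∃ g : G, y = shift g η}) hcont
    have h3 : shift u '' {y | ∃ g : G, y = shift g η} ⊆ {y | ∃ g : G, y = shift g η} := by
      rintro _ ⟨w, ⟨g0, rfl⟩, rfl⟩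
      exact ⟨u * g0, shift_shift u g0 η⟩
    exact closure_mono h3 (h2 h1)
  intro i x hx y hy hπxy
  funext g
  rw [hA] at hx hy
  obtain ⟨k₁, hk₁⟩ := Set.mem_iUnion.1 (Set.mem_iInter.1 hx g)
  obtain ⟨k₂, hk₂⟩ := Set.mem_iUnion.1 (Set.mem_iInter.1 hy g)
  set l := max k₁ k₂ with hl
  set n := (i : ℕ) + 1 + l * r with hn
  have hn1 : 1 ≤ n := by omega
  have hxZ : x ∈ shift g '' Z i l := Set.mem_iInter₂.1 hk₁ l (le_max_left _ _)
  have hyZ : y ∈ shift g '' Z i l := Set.mem_iInter₂.1 hk₂ l (le_max_right _ _)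
  obtain ⟨z, hz, hxz⟩ := hxZ
  obtain ⟨z', hz', hyz⟩ := hyZ
  rw [hZ] at hz hz'
  obtain ⟨v, hv, hv2⟩ := Set.mem_iUnion₂.1 hz
  obtain ⟨c, hc, hzc⟩ := hv2
  obtain ⟨w, hw, hw2⟩ := Set.mem_iUnion₂.1 hz'
  obtain ⟨c', hc', hzc'⟩ := hw2
  have hxeq : x = shift (g * v⁻¹) c := by rw [← hxz, ← hzc, shift_shift]
  have hyeq : y = shift (g * w⁻¹) c' := by rw [← hyz, ← hzc', shift_shift]
  -- c, c' ∈ C n and in X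
  have hcCn : c ∈ C n := ((hCi n i) ▸ hc).1
  have hc'Cn : c' ∈ C n := ((hCi n i) ▸ hc').1
  have hcX : c ∈ X := ((hC n) ▸ hcCn).1
  have hc'X : c' ∈ X := ((hC n) ▸ hc'Cn).1
  have hxX : x ∈ X := hxeq ▸ hXinv _ _ hcX
  have hyX : y ∈ X := hyeq ▸ hXinv _ _ hc'X
  -- π values at level n
  have hπx : π x n = ((g * v⁻¹ : G) : G ⧸ Γ n) :=
    hπ x hxX n (g * v⁻¹) ⟨c, hcCn, hxeq.symm⟩
  have hπy : π y n = ((g * w⁻¹ : G) : G ⧸ Γ n) :=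
    hπ y hyX n (g * w⁻¹) ⟨c', hc'Cn, hyeq.symm⟩
  have hquot : ((g * v⁻¹ : G) : G ⧸ Γ n) = ((g * w⁻¹ : G) : G ⧸ Γ n) := by
    rw [← hπx, ← hπy, hπxy]
  have hmemΓ : (g * v⁻¹)⁻¹ * (g * w⁻¹) ∈ Γ n := QuotientGroup.eq.1 hquot
  have hvw : v * w⁻¹ ∈ Γ n := by
    have : (g * v⁻¹)⁻¹ * (g * w⁻¹) = v * w⁻¹ := by group
    rwa [this] at hmemΓ
  -- fundamental domain uniqueness gives w = v
  have hwv : w = v := by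
    obtain ⟨p, _, hpuniq⟩ := hfund n v
    have e1 := hpuniq (v * w⁻¹, w) ⟨hvw, hw, by group⟩
    have e2 := hpuniq (1, v) ⟨(Γ n).one_mem, hv, by group⟩
    have := e1.trans e2.symm
    exact congrArg Prod.snd this
  subst hwv
  -- x g = c v and y g = c' v
  have hxg : x g = c w := by
    rw [hxeq]
    show c ((g * w⁻¹)⁻¹ * g) = c w
    congr 1; group
  have hyg : y g = c' w := by
    rw [hyeq]
    show c' ((g * w⁻¹)⁻¹ * g) = c' w
    congr 1; group
  rw [hxg, hyg]
  -- key: the value at w is determined for any member of Ci n i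
  by_cases hwJ : w ∈ J n
  · have h1 := ((hCi n i) ▸ hc).2 w hwJ
    have h2 := ((hCi n i) ▸ hc').2 w hwJ
    rw [h1, h2]
  · -- w ∈ ⋃ m < n, J m * Γ (m+1)
    have hwU : w ∈ ⋃ m, ⋃ (_ : m < n), J m * ((Γ (m + 1) : Subgroup G) : Set G) := by
      by_contra hcon
      exact hwJ ((hJ n hn1) ▸ ⟨Finset.mem_coe.2 hv, hcon⟩)
    obtain ⟨m, hm, hmem⟩ := Set.mem_iUnion₂.1 hwU
    obtain ⟨h, hh, γ, hγ, hprod⟩ := Set.mem_mul.1 hmem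
    have hle : Γ n ≤ Γ (m + 1) := hanti.antitone (by omega)
    -- w is periodic for η with symbol sym hr m
    have hper : w ∈ Per η (Γ n) (sym hr m) := by
      intro γ' hγ'
      have hγ'' : h⁻¹ * γ' * h ∈ Γ (m + 1) := (hnormal (m + 1)).conj_mem' γ' (hle hγ') h
      have key := hηdef m h hh (h⁻¹ * γ' * h * γ) ((Γ (m + 1)).mul_mem hγ'' hγ)
      have : γ' * w = h * (h⁻¹ * γ' * h * γ) := by rw [← hprod]; group
      rw [this, key]
    have hval : ∀ d : G → Fin r, d ∈ Ci n i → d w = sym hr m := by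
      intro d hd
      have hdCn : d ∈ C n := ((hCi n i) ▸ hd).1
      have hPer : ∀ a : Fin r, Per d (Γ n) a = Per η (Γ n) a := ((hC n) ▸ hdCn).2
      have : w ∈ Per d (Γ n) (sym hr m) := (hPer (sym hr m)).symm ▸ hper
      have := this 1 (Γ n).one_mem
      rwa [one_mul] at this
    rw [hval c hc, hval c' hc']
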